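/- For every q > 0, the sequence n ↦ Γ(qn+1)/Γ(q(n−1)+1) is strictly increasing on the positive integers: for all integers 1 ≤ m < n, Γ(qm+1)/Γ(q(m−1)+1) < Γ(qn+1)/Γ(q(n−1)+1). -/
import Mathlib

open Filter Finset Nat

/-- Per-`n` comparison of `GammaSeq` products. -/
lemma gammaSeq_prod_le (q t s : ℝ) (hq : 0 < q) (ht : 0 < t) (hts : t < s) (n : ℕ) :
    Real.GammaSeq (t + q) n * Real.GammaSeq s n ≤
      ((s + q) * t) / ((t + q) * s) *
        (Real.GammaSeq (s + q) n * Real.GammaSeq t n) := by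
  have hs : 0 < s := ht.trans hts
  have htq : 0 < t + q := by linarith
  have hsq : 0 < s + q := by linarith
  set r0 : ℝ := ((s + q) * t) / ((t + q) * s) with hr0def
  have hr0 : 0 < r0 := by positivity
  -- positivity of the denominators
  have hP : ∀ x : ℝ, 0 < x → 0 < ∏ j ∈ range (n + 1), (x + (j : ℝ)) := by
    intro x hx
    exact Finset.prod_pos fun j _ => by positivity
  have hA := hP (t + q) htq
  have hB := hP s hs
  have hC := hP (s + q) hsq
  have hD := hP t ht
  -- core product inequality
  have core : (∏ j ∈ range (n + 1), ((s + q) + (j : ℝ))) * (∏ j ∈ range (n + 1), (t + (j : ℝ)))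
      ≤ r0 * ((∏ j ∈ range (n + 1), ((t + q) + (j : ℝ))) *
        (∏ j ∈ range (n + 1), (s + (j : ℝ)))) := by
    rw [← Finset.prod_mul_distrib, ← Finset.prod_mul_distrib,
      Finset.prod_range_succ' (fun j => ((s + q) + (j : ℝ)) * (t + (j : ℝ))),
      Finset.prod_range_succ' (fun j => ((t + q) + (j : ℝ)) * (s + (j : ℝ)))]
    push_cast
    have h0 : r0 * ((∏ j ∈ range n, ((t + q) + ((j : ℝ) + 1)) * (s + ((j : ℝ) + 1))) *
        (((t + q) + 0) * (s + 0)))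
        = ((s + q) + 0) * (t + 0) *
          ∏ j ∈ range n, ((t + q) + ((j : ℝ) + 1)) * (s + ((j : ℝ) + 1)) := by
      rw [hr0def]
      field_simp
      ring
    rw [h0]
    have hprod : (∏ j ∈ range n, ((s + q) + ((j : ℝ) + 1)) * (t + ((j : ℝ) + 1)))
        ≤ ∏ j ∈ range n, ((t + q) + ((j : ℝ) + 1)) * (s + ((j : ℝ) + 1)) := by
      refine Finset.prod_le_prod (fun j _ => by positivity) (fun j _ => ?_)
      nlinarith [mul_pos hq (sub_pos.mpr hts)]
    calc (∏ j ∈ range n, ((s + q) + ((j : ℝ) + 1)) * (t + ((j : ℝ) + 1))) *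
          (((s + q) + 0) * (t + 0))
        ≤ (∏ j ∈ range n, ((t + q) + ((j : ℝ) + 1)) * (s + ((j : ℝ) + 1))) *
          (((s + q) + 0) * (t + 0)) := by
          apply mul_le_mul_of_nonneg_right hprod; positivity
      _ = ((s + q) + 0) * (t + 0) *
          ∏ j ∈ range n, ((t + q) + ((j : ℝ) + 1)) * (s + ((j : ℝ) + 1)) := by ring
  -- unfold GammaSeq
  simp only [Real.GammaSeq]
  rw [div_mul_div_comm ((n : ℝ) ^ (t + q) * (n ! : ℝ)) (∏ j ∈ range (n + 1), ((t + q) + (j : ℝ)))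
      ((n : ℝ) ^ s * (n ! : ℝ)) (∏ j ∈ range (n + 1), (s + (j : ℝ))),
    div_mul_div_comm ((n : ℝ) ^ (s + q) * (n ! : ℝ)) (∏ j ∈ range (n + 1), ((s + q) + (j : ℝ)))
      ((n : ℝ) ^ t * (n ! : ℝ)) (∏ j ∈ range (n + 1), (t + (j : ℝ))),
    ← mul_div_assoc]
  rw [div_le_div_iff₀ (by positivity) (by positivity)]
  have hpow : ((n : ℝ) ^ (t + q) * (n ! : ℝ)) * ((n : ℝ) ^ s * (n ! : ℝ))
      = ((n : ℝ) ^ (s + q) * (n ! : ℝ)) * ((n : ℝ) ^ t * (n ! : ℝ)) := by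
    rcases Nat.eq_zero_or_pos n with rfl | hn
    · simp only [Nat.cast_zero, Real.zero_rpow htq.ne', Real.zero_rpow hsq.ne']
      ring
    · have hn' : (0 : ℝ) < n := by exact_mod_cast hn
      have hx : (n : ℝ) ^ (t + q) * (n : ℝ) ^ s = (n : ℝ) ^ (s + q) * (n : ℝ) ^ t := by
        rw [← Real.rpow_add hn', ← Real.rpow_add hn']
        ring_nf
      linear_combination ((n ! : ℝ) * (n ! : ℝ)) * hx
    -- combine
  calc ((n : ℝ) ^ (t + q) * (n ! : ℝ)) * ((n : ℝ) ^ s * (n ! : ℝ)) *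
        ((∏ j ∈ range (n + 1), ((s + q) + (j : ℝ))) * (∏ j ∈ range (n + 1), (t + (j : ℝ))))
      ≤ ((n : ℝ) ^ (t + q) * (n ! : ℝ)) * ((n : ℝ) ^ s * (n ! : ℝ)) *
        (r0 * ((∏ j ∈ range (n + 1), ((t + q) + (j : ℝ))) *
          (∏ j ∈ range (n + 1), (s + (j : ℝ))))) := by
        apply mul_le_mul_of_nonneg_left core; positivity
    _ = r0 * (((n : ℝ) ^ (s + q) * (n ! : ℝ)) * ((n : ℝ) ^ t * (n ! : ℝ))) *
        ((∏ j ∈ range (n + 1), ((t + q) + (j : ℝ))) *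
          (∏ j ∈ range (n + 1), (s + (j : ℝ)))) := by rw [← hpow]; ring

/-- Strict monotonicity of `t ↦ Γ(t+q)/Γ(t)` on `(0, ∞)`. -/
lemma gamma_ratio_strict (q t s : ℝ) (hq : 0 < q) (ht : 0 < t) (hts : t < s) :
    Real.Gamma (t + q) / Real.Gamma t < Real.Gamma (s + q) / Real.Gamma s := by
  have hs : 0 < s := ht.trans hts
  have htq : (0 : ℝ) < t + q := by linarith
  have hsq : (0 : ℝ) < s + q := by linarith
  set r0 : ℝ := ((s + q) * t) / ((t + q) * s) with hr0def
  have hr0lt : r0 < 1 := by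
    rw [hr0def, div_lt_one (by positivity)]
    nlinarith [mul_pos hq (sub_pos.mpr hts)]
  have h1 : Tendsto (fun n => Real.GammaSeq (t + q) n * Real.GammaSeq s n) atTop
      (nhds (Real.Gamma (t + q) * Real.Gamma s)) :=
    (Real.GammaSeq_tendsto_Gamma _).mul (Real.GammaSeq_tendsto_Gamma _)
  have h2 : Tendsto (fun n => r0 * (Real.GammaSeq (s + q) n * Real.GammaSeq t n)) atTop
      (nhds (r0 * (Real.Gamma (s + q) * Real.Gamma t))) :=
    ((Real.GammaSeq_tendsto_Gamma _).mul (Real.GammaSeq_tendsto_Gamma _)).const_mul r0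
  have hle : Real.Gamma (t + q) * Real.Gamma s ≤ r0 * (Real.Gamma (s + q) * Real.Gamma t) :=
    le_of_tendsto_of_tendsto' h1 h2 (gammaSeq_prod_le q t s hq ht hts)
  have hGt := Real.Gamma_pos_of_pos ht
  have hGs := Real.Gamma_pos_of_pos hs
  have hGsq := Real.Gamma_pos_of_pos hsq
  have hlt : Real.Gamma (t + q) * Real.Gamma s < Real.Gamma (s + q) * Real.Gamma t := by
    calc Real.Gamma (t + q) * Real.Gamma s ≤ r0 * (Real.Gamma (s + q) * Real.Gamma t) := hle
      _ < 1 * (Real.Gamma (s + q) * Real.Gamma t) := by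
          apply mul_lt_mul_of_pos_right hr0lt; positivity
      _ = Real.Gamma (s + q) * Real.Gamma t := one_mul _
  rw [div_lt_div_iff₀ hGt hGs]
  linarith [hlt]

/-- For every `q > 0`, the sequence `n ↦ Γ(qn+1)/Γ(q(n−1)+1)` is strictly increasing
on the positive integers: for `1 ≤ m < n`,
`Γ(qm+1)/Γ(q(m−1)+1) < Γ(qn+1)/Γ(q(n−1)+1)`.  Here `Γ` is the real Gamma function. -/
theorem ml_nq_strictMono (q : ℝ) (hq : 0 < q) (m n : ℕ) (hm : 1 ≤ m) (hmn : m < n) :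
    Real.Gamma (q * (m : ℝ) + 1) / Real.Gamma (q * ((m : ℝ) - 1) + 1) <
      Real.Gamma (q * (n : ℝ) + 1) / Real.Gamma (q * ((n : ℝ) - 1) + 1) := by
  have hm' : (1 : ℝ) ≤ (m : ℝ) := by exact_mod_cast hm
  have hmn' : (m : ℝ) < (n : ℝ) := by exact_mod_cast hmn
  have ht : (0 : ℝ) < q * ((m : ℝ) - 1) + 1 := by nlinarith
  have hts : q * ((m : ℝ) - 1) + 1 < q * ((n : ℝ) - 1) + 1 := by nlinarith
  have key := gamma_ratio_strict q (q * ((m : ℝ) - 1) + 1) (q * ((n : ℝ) - 1) + 1) hq ht hts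
  have e1 : q * ((m : ℝ) - 1) + 1 + q = q * (m : ℝ) + 1 := by ring
  have e2 : q * ((n : ℝ) - 1) + 1 + q = q * (n : ℝ) + 1 := by ring
  rwa [e1, e2] at key
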